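/- Work in the Euclidean plane ℝ² with the standard inner product. Let L : ℝ² → ℝ² be the rotator by π/2, L(x, y) = (−y, x), let a*, b* ∈ ℝ², and define single-valued operators A x = L x + a* and B x = −L x − b*. Then: (i) {w ∈ ℝ² : ∃ x, w = A(x − w) + B x} = { ½((a* − b*) − L(a* − b*)) }, so the infimal displacement vector of the Douglas–Rachford operator of (A,B) is v(A,B) = ½(Id − L)(a* − b*); (ii) {w ∈ ℝ² : ∃ x, w = B(x − w) + A x} = { ½((a* − b*) + L(a* − b*)) }, so v(B,A) = ½(Id + L)(a* − b*); and (iii) ⟨v(A,B), v(B,A)⟩ = 0, and both vectors are nonzero whenever a* ≠ b*. -/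

import Mathlib

open scoped RealInnerProductSpace

private lemma ext2' {v w : EuclideanSpace ℝ (Fin 2)} (h0 : v 0 = w 0) (h1 : v 1 = w 1) :
    v = w := by
  ext i
  fin_cases i
  · exact h0
  · exact h1


/-- In `ℝ²` with the rotator `L(x,y) = (-y,x)`, and
`A x = L x + a*`, `B x = -L x - b*`: (i) the `w`-perturbed problem for `(A,B)` is
solvable exactly for `w = ½(Id - L)(a* - b*)`, so `v(A,B) = ½(Id - L)(a* - b*)`;
(ii) for `(B,A)` exactly for `w = ½(Id + L)(a* - b*)`, so `v(B,A) = ½(Id + L)(a* - b*)`;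
(iii) `⟪v(A,B), v(B,A)⟫ = 0`, and both are nonzero whenever `a* ≠ b*`. -/
theorem stmt17 (a b : EuclideanSpace ℝ (Fin 2))
    (L : EuclideanSpace ℝ (Fin 2) → EuclideanSpace ℝ (Fin 2))
    (hL : ∀ p : EuclideanSpace ℝ (Fin 2), L p 0 = -(p 1) ∧ L p 1 = p 0)
    (A B : EuclideanSpace ℝ (Fin 2) → EuclideanSpace ℝ (Fin 2))
    (hA : ∀ x, A x = L x + a) (hB : ∀ x, B x = -(L x) - b) :
    ({w : EuclideanSpace ℝ (Fin 2) | ∃ x, w = A (x - w) + B x}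
        = {(2 : ℝ)⁻¹ • ((a - b) - L (a - b))}) ∧
    ({w : EuclideanSpace ℝ (Fin 2) | ∃ x, w = B (x - w) + A x}
        = {(2 : ℝ)⁻¹ • ((a - b) + L (a - b))}) ∧
    ⟪(2 : ℝ)⁻¹ • ((a - b) - L (a - b)), (2 : ℝ)⁻¹ • ((a - b) + L (a - b))⟫ = 0 ∧
    (a ≠ b →
      (2 : ℝ)⁻¹ • ((a - b) - L (a - b)) ≠ 0 ∧
      (2 : ℝ)⁻¹ • ((a - b) + L (a - b)) ≠ 0) := by
  have hab0 : (a - b : EuclideanSpace ℝ (Fin 2)) 0 = a 0 - b 0 := rfl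
  have hab1 : (a - b : EuclideanSpace ℝ (Fin 2)) 1 = a 1 - b 1 := rfl
  refine ⟨?_, ?_, ?_, ?_⟩
  · ext w
    simp only [Set.mem_setOf_eq, Set.mem_singleton_iff]
    constructor
    · rintro ⟨x, hx⟩
      have h0 : w 0 = (A (x - w) + B x) 0 := by rw [← hx]
      have h1 : w 1 = (A (x - w) + B x) 1 := by rw [← hx]
      simp only [PiLp.add_apply, PiLp.sub_apply, PiLp.neg_apply, hA, hB,
        (hL _).1, (hL _).2] at h0 h1
      refine ext2' ?_ ?_ <;>
        simp only [PiLp.smul_apply, PiLp.sub_apply, (hL _).1, (hL _).2,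
          hab0, hab1, smul_eq_mul] <;> linarith
    · intro hw
      refine ⟨0, ?_⟩
      have hw0 : w 0 = (2:ℝ)⁻¹ * ((a 0 - b 0) + (a 1 - b 1)) := by
        rw [hw]; simp only [PiLp.smul_apply, PiLp.sub_apply, (hL _).1, hab0, hab1,
          smul_eq_mul]; try ring
      have hw1 : w 1 = (2:ℝ)⁻¹ * ((a 1 - b 1) - (a 0 - b 0)) := by
        rw [hw]; simp only [PiLp.smul_apply, PiLp.sub_apply, (hL _).2, hab0, hab1,
          smul_eq_mul]; try ring
      refine ext2' ?_ ?_ <;>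
        simp only [PiLp.add_apply, PiLp.sub_apply, PiLp.neg_apply, hA, hB,
          (hL _).1, (hL _).2, PiLp.zero_apply, hw0, hw1] <;> ring
  · ext w
    simp only [Set.mem_setOf_eq, Set.mem_singleton_iff]
    constructor
    · rintro ⟨x, hx⟩
      have h0 : w 0 = (B (x - w) + A x) 0 := by rw [← hx]
      have h1 : w 1 = (B (x - w) + A x) 1 := by rw [← hx]
      simp only [PiLp.add_apply, PiLp.sub_apply, PiLp.neg_apply, hA, hB,
        (hL _).1, (hL _).2] at h0 h1
      refine ext2' ?_ ?_ <;>
        simp only [PiLp.smul_apply, PiLp.add_apply, PiLp.sub_apply, (hL _).1, (hL _).2,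
          hab0, hab1, smul_eq_mul] <;> linarith
    · intro hw
      refine ⟨0, ?_⟩
      have hw0 : w 0 = (2:ℝ)⁻¹ * ((a 0 - b 0) - (a 1 - b 1)) := by
        rw [hw]; simp only [PiLp.smul_apply, PiLp.add_apply, PiLp.sub_apply, (hL _).1,
          hab0, hab1, smul_eq_mul]; try ring
      have hw1 : w 1 = (2:ℝ)⁻¹ * ((a 1 - b 1) + (a 0 - b 0)) := by
        rw [hw]; simp only [PiLp.smul_apply, PiLp.add_apply, PiLp.sub_apply, (hL _).2,
          hab0, hab1, smul_eq_mul]; try ring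
      refine ext2' ?_ ?_ <;>
        simp only [PiLp.add_apply, PiLp.sub_apply, PiLp.neg_apply, hA, hB,
          (hL _).1, (hL _).2, PiLp.zero_apply, hw0, hw1] <;> ring
  · simp only [PiLp.inner_apply, RCLike.inner_apply, conj_trivial, Fin.sum_univ_two,
      PiLp.smul_apply, PiLp.add_apply, PiLp.sub_apply, (hL _).1, (hL _).2,
      hab0, hab1, smul_eq_mul]
    ring
  · intro hab
    have hne : a 0 - b 0 ≠ 0 ∨ a 1 - b 1 ≠ 0 := by
      by_contra h
      push_neg at h
      exact hab (ext2' (by linarith [h.1]) (by linarith [h.2]))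
    constructor <;> intro h0 <;>
    · have c0 := congrFun (congrArg WithLp.ofLp h0) 0
      have c1 := congrFun (congrArg WithLp.ofLp h0) 1
      simp only [PiLp.smul_apply, PiLp.add_apply, PiLp.sub_apply, (hL _).1, (hL _).2,
        hab0, hab1, smul_eq_mul, PiLp.zero_apply] at c0 c1
      rcases hne with h | h <;> apply h <;> linarith
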